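/- There exists a 𝒯-valued stopping time τ⋄ whose value attains the relaxed optimal value: E[Y_{τ⋄}] = sup over all relaxed stopping rules μ = (P_t)_{t∈𝒯} of E[Σ_{t∈𝒯} P_t Y_t]. In particular the supremum over relaxed stopping rules is attained by a Dirac rule δ_{τ⋄}. -/

import Mathlib

open MeasureTheory
open scoped ENNReal NNReal

namespace RSPAux
set_option linter.unusedSectionVars false

attribute [local instance] Fintype.toLocallyFiniteOrder
attribute [local instance] LinearLocallyFiniteOrder.succOrder

variable {T Ω : Type*} [Fintype T] [Nonempty T] [LinearOrder T]
  [m0 : MeasurableSpace Ω] (Q : Measure Ω) [IsProbabilityMeasure Q]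
  (𝓕 : T → MeasurableSpace Ω) (Y : T → Ω → ℝ)

open scoped Classical in
noncomputable def snell : T → Ω → ℝ := fun t =>
  if _ : IsMax t then Y t
  else fun ω => max (Y t ω) ((Q[snell (Order.succ t) | 𝓕 t]) ω)
termination_by t => (Finset.univ.filter fun s => t < s).card
decreasing_by
  rename_i h
  apply Finset.card_lt_card
  constructor
  · intro s hs
    simp only [Finset.mem_filter, Finset.mem_univ, true_and] at hs ⊢
    exact lt_trans (Order.lt_succ_of_not_isMax h) hs
  · intro hsub
    have := hsub (Finset.mem_filter.mpr ⟨Finset.mem_univ _, Order.lt_succ_of_not_isMax h⟩)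
    simp only [Finset.mem_filter, Finset.mem_univ, true_and] at this
    exact lt_irrefl _ this

lemma snell_isMax {t : T} (ht : IsMax t) : snell Q 𝓕 Y t = Y t := by
  rw [snell]; simp [ht]

lemma snell_not_isMax {t : T} (ht : ¬ IsMax t) :
    snell Q 𝓕 Y t = fun ω => max (Y t ω) ((Q[snell Q 𝓕 Y (Order.succ t) | 𝓕 t]) ω) := by
  rw [snell]; simp [ht]


lemma snell_measurable (hadp : ∀ t, Measurable[𝓕 t] (Y t)) (t : T) :
    Measurable[𝓕 t] (snell Q 𝓕 Y t) := by
  by_cases ht : IsMax t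
  · rw [snell_isMax Q 𝓕 Y ht]; exact hadp t
  · rw [snell_not_isMax Q 𝓕 Y ht]
    exact (hadp t).max stronglyMeasurable_condExp.measurable

lemma snell_integrable (hint : ∀ t, Integrable (Y t) Q) (t : T) :
    Integrable (snell Q 𝓕 Y t) Q := by
  by_cases ht : IsMax t
  · rw [snell_isMax Q 𝓕 Y ht]; exact hint t
  · rw [snell_not_isMax Q 𝓕 Y ht]
    have h := (hint t).sup (integrable_condExp (f := snell Q 𝓕 Y (Order.succ t)) (m := 𝓕 t))
    exact h.congr (Filter.Eventually.of_forall fun ω => by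
      simp [Pi.sup_apply, max_def])

lemma le_snell (t : T) (ω : Ω) : Y t ω ≤ snell Q 𝓕 Y t ω := by
  by_cases ht : IsMax t
  · rw [snell_isMax Q 𝓕 Y ht]
  · rw [snell_not_isMax Q 𝓕 Y ht]; exact le_max_left _ _

lemma condexp_le_snell {t : T} (ht : ¬ IsMax t) (ω : Ω) :
    (Q[snell Q 𝓕 Y (Order.succ t) | 𝓕 t]) ω ≤ snell Q 𝓕 Y t ω := by
  rw [snell_not_isMax Q 𝓕 Y ht]; exact le_max_right _ _

lemma snell_eq_condexp_of_ne {t : T} (ht : ¬ IsMax t) {ω : Ω}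
    (hne : snell Q 𝓕 Y t ω ≠ Y t ω) :
    snell Q 𝓕 Y t ω = (Q[snell Q 𝓕 Y (Order.succ t) | 𝓕 t]) ω := by
  rw [snell_not_isMax Q 𝓕 Y ht] at hne ⊢
  rcases max_choice (Y t ω) ((Q[snell Q 𝓕 Y (Order.succ t) | 𝓕 t]) ω) with h | h
  · exact absurd h hne
  · exact h

open scoped Classical in
noncomputable def tau (ω : Ω) : T :=
  (Finset.univ.filter fun t => snell Q 𝓕 Y t ω = Y t ω).min' (by
    obtain ⟨m, hm⟩ : ∃ m : T, IsMax m := by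
      refine ⟨(Finset.univ : Finset T).max' Finset.univ_nonempty, ?_⟩
      intro b _
      exact Finset.le_max' _ _ (Finset.mem_univ b)
    refine ⟨m, Finset.mem_filter.mpr ⟨Finset.mem_univ _, ?_⟩⟩
    rw [snell_isMax Q 𝓕 Y hm])

open scoped Classical in
lemma tau_mem_filter (ω : Ω) :
    tau Q 𝓕 Y ω ∈ Finset.univ.filter (fun t => snell Q 𝓕 Y t ω = Y t ω) := by
  unfold tau
  exact Finset.min'_mem _ _

lemma snell_tau (ω : Ω) :
    snell Q 𝓕 Y (tau Q 𝓕 Y ω) ω = Y (tau Q 𝓕 Y ω) ω := by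
  classical
  exact (Finset.mem_filter.mp (tau_mem_filter Q 𝓕 Y ω)).2

lemma tau_le {ω : Ω} {t : T} (h : snell Q 𝓕 Y t ω = Y t ω) : tau Q 𝓕 Y ω ≤ t := by
  classical
  unfold tau
  exact Finset.min'_le _ t (Finset.mem_filter.mpr ⟨Finset.mem_univ t, h⟩)

lemma ne_of_lt_tau {ω : Ω} {s : T} (h : s < tau Q 𝓕 Y ω) :
    snell Q 𝓕 Y s ω ≠ Y s ω :=
  fun he => absurd (tau_le Q 𝓕 Y he) (not_le.mpr h)

lemma tau_measSet (hmono : Monotone 𝓕) (hadp : ∀ t, Measurable[𝓕 t] (Y t)) (t : T) :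
    MeasurableSet[𝓕 t] {ω | tau Q 𝓕 Y ω ≤ t} := by
  classical
  have hset : {ω | tau Q 𝓕 Y ω ≤ t}
      = ⋃ s ∈ Finset.univ.filter (fun s : T => s ≤ t), {ω | snell Q 𝓕 Y s ω = Y s ω} := by
    ext ω
    simp only [Set.mem_setOf_eq, Set.mem_iUnion, Finset.mem_filter, Finset.mem_univ, true_and]
    constructor
    · intro h
      exact ⟨tau Q 𝓕 Y ω, h, snell_tau Q 𝓕 Y ω⟩
    · rintro ⟨s, hst, hs⟩
      exact le_trans (tau_le Q 𝓕 Y hs) hst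
  rw [hset]
  refine MeasurableSet.biUnion (Finset.countable_toSet _) ?_
  intro s hs
  have hs' : s ∈ Finset.univ.filter (fun s : T => s ≤ t) := hs
  have hst : s ≤ t := by simpa using hs' 
  exact hmono hst _ (measurableSet_eq_fun (snell_measurable Q 𝓕 Y hadp s) (hadp s))

lemma tau_eq_measSet (hmono : Monotone 𝓕) (hadp : ∀ t, Measurable[𝓕 t] (Y t)) (t : T) :
    MeasurableSet[𝓕 t] {ω | tau Q 𝓕 Y ω = t} := by
  classical
  have hset : {ω | tau Q 𝓕 Y ω = t}
      = {ω | tau Q 𝓕 Y ω ≤ t} \ ⋃ s ∈ Finset.univ.filter (fun s : T => s < t),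
          {ω | tau Q 𝓕 Y ω ≤ s} := by
    ext ω
    simp only [Set.mem_setOf_eq, Set.mem_diff, Set.mem_iUnion, Finset.mem_filter,
      Finset.mem_univ, true_and, not_exists]
    constructor
    · intro h
      refine ⟨le_of_eq h, fun s hst hs => ?_⟩
      exact absurd (lt_of_le_of_lt (h ▸ hs) hst) (lt_irrefl _)
    · rintro ⟨h1, h2⟩
      rcases lt_or_eq_of_le h1 with h | h
      · exact absurd (le_refl _) (h2 _ h)
      · exact h
  rw [hset]
  refine (tau_measSet Q 𝓕 Y hmono hadp t).diff ?_
  refine MeasurableSet.biUnion (Finset.countable_toSet _) ?_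
  intro s hs
  have hs' : s ∈ Finset.univ.filter (fun s : T => s < t) := hs
  have hst : s < t := by simpa using hs' 
  exact hmono hst.le _ (tau_measSet Q 𝓕 Y hmono hadp s)

lemma Ytau_eq_sum (ω : Ω) :
    Y (tau Q 𝓕 Y ω) ω = ∑ t, if tau Q 𝓕 Y ω = t then Y t ω else 0 := by
  classical
  rw [Finset.sum_ite_eq]
  simp

lemma integrable_Ytau (hmono : Monotone 𝓕) (hle : ∀ t, 𝓕 t ≤ m0)
    (hadp : ∀ t, Measurable[𝓕 t] (Y t)) (hint : ∀ t, Integrable (Y t) Q) :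
    Integrable (fun ω => Y (tau Q 𝓕 Y ω) ω) Q := by
  classical
  have heq : (fun ω => Y (tau Q 𝓕 Y ω) ω)
      = fun ω => ∑ t, if tau Q 𝓕 Y ω = t then Y t ω else 0 :=
    funext fun ω => Ytau_eq_sum Q 𝓕 Y ω
  rw [heq]
  refine integrable_finset_sum _ fun t _ => ?_
  have hms : MeasurableSet {ω | tau Q 𝓕 Y ω = t} :=
    hle t _ (tau_eq_measSet Q 𝓕 Y hmono hadp t)
  have hi := (hint t).indicator hms
  exact hi.congr (Filter.Eventually.of_forall fun ω => by
    by_cases h : tau Q 𝓕 Y ω = t <;> simp [Set.indicator_apply, h])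

lemma key (hmono : Monotone 𝓕) (hle : ∀ t, 𝓕 t ≤ m0)
    (hadp : ∀ t, Measurable[𝓕 t] (Y t)) (hint : ∀ t, Integrable (Y t) Q) (t : T) :
    ∫ ω in {ω | t ≤ tau Q 𝓕 Y ω}, snell Q 𝓕 Y t ω ∂Q
      = ∫ ω in {ω | t ≤ tau Q 𝓕 Y ω}, Y (tau Q 𝓕 Y ω) ω ∂Q := by
  induction t using IsWellFounded.induction (r := (· > · : T → T → Prop)) with
  | _ t ih =>
  have hYt := integrable_Ytau Q 𝓕 Y hmono hle hadp hint
  by_cases ht : IsMax t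
  · have hset : {ω | t ≤ tau Q 𝓕 Y ω} = {ω | tau Q 𝓕 Y ω = t} := by
      ext ω
      simp only [Set.mem_setOf_eq]
      exact ⟨fun h => le_antisymm (ht h) h, fun h => le_of_eq h.symm⟩
    rw [hset]
    refine setIntegral_congr_fun (hle t _ (tau_eq_measSet Q 𝓕 Y hmono hadp t)) ?_
    intro ω hω
    have hω' : tau Q 𝓕 Y ω = t := hω
    rw [← hω']
    exact snell_tau Q 𝓕 Y ω
  · have hlt : t < Order.succ t := Order.lt_succ_of_not_isMax ht
    set u := Order.succ t with hu
    have hA : {ω | u ≤ tau Q 𝓕 Y ω} = {ω | tau Q 𝓕 Y ω ≤ t}ᶜ := by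
      ext ω
      simp only [Set.mem_setOf_eq, Set.mem_compl_iff, not_le]
      exact Order.succ_le_iff_of_not_isMax ht
    have hAm : MeasurableSet[𝓕 t] {ω | u ≤ tau Q 𝓕 Y ω} := by
      rw [hA]; exact (tau_measSet Q 𝓕 Y hmono hadp t).compl
    have hAm0 : MeasurableSet {ω | u ≤ tau Q 𝓕 Y ω} := hle t _ hAm
    have hEqm0 : MeasurableSet {ω | tau Q 𝓕 Y ω = t} :=
      hle t _ (tau_eq_measSet Q 𝓕 Y hmono hadp t)
    have hsplit : {ω | t ≤ tau Q 𝓕 Y ω}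
        = {ω | tau Q 𝓕 Y ω = t} ∪ {ω | u ≤ tau Q 𝓕 Y ω} := by
      ext ω
      simp only [Set.mem_setOf_eq, Set.mem_union]
      constructor
      · intro h
        rcases eq_or_lt_of_le h with h' | h'
        · exact Or.inl h'.symm
        · exact Or.inr ((Order.succ_le_iff_of_not_isMax ht).mpr h')
      · rintro (h' | h')
        · exact le_of_eq h'.symm
        · exact le_trans hlt.le h'
    have hdisj : Disjoint {ω | tau Q 𝓕 Y ω = t} {ω | u ≤ tau Q 𝓕 Y ω} := by
      rw [Set.disjoint_left]
      intro ω h1 h2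
      simp only [Set.mem_setOf_eq] at h1 h2
      exact absurd (h1 ▸ h2) (not_le.mpr hlt)
    rw [hsplit,
      setIntegral_union hdisj hAm0 ((snell_integrable Q 𝓕 Y hint t)).integrableOn
        ((snell_integrable Q 𝓕 Y hint t)).integrableOn,
      setIntegral_union hdisj hAm0 hYt.integrableOn hYt.integrableOn]
    congr 1
    · refine setIntegral_congr_fun hEqm0 ?_
      intro ω hω
      have hω' : tau Q 𝓕 Y ω = t := hω
      rw [← hω']
      exact snell_tau Q 𝓕 Y ω
    · have h1 : ∫ ω in {ω | u ≤ tau Q 𝓕 Y ω}, snell Q 𝓕 Y t ω ∂Q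
          = ∫ ω in {ω | u ≤ tau Q 𝓕 Y ω}, (Q[snell Q 𝓕 Y u | 𝓕 t]) ω ∂Q := by
        refine setIntegral_congr_fun hAm0 ?_
        intro ω hω
        have hω' : u ≤ tau Q 𝓕 Y ω := hω
        have htlt : t < tau Q 𝓕 Y ω := lt_of_lt_of_le hlt hω'
        exact snell_eq_condexp_of_ne Q 𝓕 Y ht (ne_of_lt_tau Q 𝓕 Y htlt)
      have h2 : ∫ ω in {ω | u ≤ tau Q 𝓕 Y ω}, (Q[snell Q 𝓕 Y u | 𝓕 t]) ω ∂Q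
          = ∫ ω in {ω | u ≤ tau Q 𝓕 Y ω}, snell Q 𝓕 Y u ω ∂Q :=
        setIntegral_condExp (hle t) (snell_integrable Q 𝓕 Y hint u) hAm
      rw [h1, h2]
      exact ih u hlt

lemma integral_snell_bot (hmono : Monotone 𝓕) (hle : ∀ t, 𝓕 t ≤ m0)
    (hadp : ∀ t, Measurable[𝓕 t] (Y t)) (hint : ∀ t, Integrable (Y t) Q) :
    ∫ ω, snell Q 𝓕 Y ((Finset.univ : Finset T).min' Finset.univ_nonempty) ω ∂Q
      = ∫ ω, Y (tau Q 𝓕 Y ω) ω ∂Q := by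
  have h := key Q 𝓕 Y hmono hle hadp hint ((Finset.univ : Finset T).min' Finset.univ_nonempty)
  have huniv : {ω : Ω | (Finset.univ : Finset T).min' Finset.univ_nonempty ≤ tau Q 𝓕 Y ω}
      = Set.univ := by
    ext ω
    simp only [Set.mem_setOf_eq, Set.mem_univ, iff_true]
    exact Finset.min'_le _ _ (Finset.mem_univ _)
  rw [huniv, Measure.restrict_univ] at h
  exact h

open scoped Classical in
lemma upper (hmono : Monotone 𝓕) (hle : ∀ t, 𝓕 t ≤ m0)
    (hadp : ∀ t, Measurable[𝓕 t] (Y t)) (hint : ∀ t, Integrable (Y t) Q)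
    (P : T → Ω → ℝ) (hPm : ∀ t, Measurable[𝓕 t] (P t))
    (hP0 : ∀ t ω, 0 ≤ P t ω) (hPsum : ∀ ω, ∑ t, P t ω = 1) (t : T) :
    ∫ ω, (∑ s ∈ Finset.univ.filter (fun s => t ≤ s), P s ω * Y s ω) ∂Q
      ≤ ∫ ω, (∑ s ∈ Finset.univ.filter (fun s => t ≤ s), P s ω) * snell Q 𝓕 Y t ω ∂Q := by
  have hPm0 : ∀ s, Measurable (P s) := fun s => (hPm s).mono (hle s) le_rfl
  have hbd : ∀ s ω, ‖P s ω‖ ≤ 1 := by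
    intro s ω
    rw [Real.norm_eq_abs, abs_le]
    refine ⟨le_trans (by norm_num) (hP0 s ω), ?_⟩
    have := Finset.single_le_sum (f := fun r => P r ω) (fun i _ => hP0 i ω) (Finset.mem_univ s)
    rw [hPsum ω] at this
    exact this
  have intPY : ∀ s, Integrable (fun ω => P s ω * Y s ω) Q := fun s =>
    (hint s).bdd_mul (hPm0 s).aestronglyMeasurable (Filter.Eventually.of_forall (hbd s))
  -- basic facts about partial tails
  have hS0 : ∀ (v : T) (ω : Ω), 0 ≤ ∑ s ∈ Finset.univ.filter (fun s => v ≤ s), P s ω :=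
    fun v ω => Finset.sum_nonneg fun i _ => hP0 i ω
  have hS1 : ∀ (v : T) (ω : Ω), ∑ s ∈ Finset.univ.filter (fun s => v ≤ s), P s ω ≤ 1 := by
    intro v ω
    calc ∑ s ∈ Finset.univ.filter (fun s => v ≤ s), P s ω
        ≤ ∑ s, P s ω :=
          Finset.sum_le_sum_of_subset_of_nonneg (Finset.filter_subset _ _)
            (fun i _ _ => hP0 i ω)
      _ = 1 := hPsum ω
  have hSbd : ∀ (v : T) (ω : Ω), ‖∑ s ∈ Finset.univ.filter (fun s => v ≤ s), P s ω‖ ≤ 1 := by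
    intro v ω
    rw [Real.norm_eq_abs, abs_le]
    exact ⟨le_trans (by norm_num) (hS0 v ω), hS1 v ω⟩
  have hSm0 : ∀ v : T, Measurable fun ω => ∑ s ∈ Finset.univ.filter (fun s => v ≤ s), P s ω :=
    fun v => Finset.measurable_sum _ fun s _ => hPm0 s
  have intSsnell : ∀ v w : T,
      Integrable (fun ω => (∑ s ∈ Finset.univ.filter (fun s => v ≤ s), P s ω)
        * snell Q 𝓕 Y w ω) Q := fun v w =>
    (snell_integrable Q 𝓕 Y hint w).bdd_mul (hSm0 v).aestronglyMeasurable (Filter.Eventually.of_forall (hSbd v))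
  induction t using IsWellFounded.induction (r := (· > · : T → T → Prop)) with
  | _ t ih =>
  by_cases ht : IsMax t
  · have hft : Finset.univ.filter (fun s => t ≤ s) = {t} := by
      ext s
      simp only [Finset.mem_filter, Finset.mem_univ, true_and, Finset.mem_singleton]
      exact ⟨fun h => le_antisymm (ht h) h, fun h => le_of_eq h.symm⟩
    rw [hft]
    simp only [Finset.sum_singleton]
    rw [snell_isMax Q 𝓕 Y ht]
  · have hlt : t < Order.succ t := Order.lt_succ_of_not_isMax ht
    set u := Order.succ t with hu
    have hins : Finset.univ.filter (fun s => t ≤ s)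
        = insert t (Finset.univ.filter fun s => u ≤ s) := by
      ext s
      simp only [Finset.mem_filter, Finset.mem_univ, true_and, Finset.mem_insert]
      constructor
      · intro h
        rcases eq_or_lt_of_le h with h' | h'
        · exact Or.inl h'.symm
        · exact Or.inr ((Order.succ_le_iff_of_not_isMax ht).mpr h')
      · rintro (h' | h')
        · exact le_of_eq h'.symm
        · exact le_trans hlt.le h'
    have hnotmem : t ∉ Finset.univ.filter fun s => u ≤ s := by
      simp only [Finset.mem_filter, Finset.mem_univ, true_and, not_le]
      exact hlt
    -- the tail weight after t is 𝓕 t-measurable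
    have hAmt : Measurable[𝓕 t] fun ω => ∑ s ∈ Finset.univ.filter (fun s => u ≤ s), P s ω := by
      have hid : (fun ω => ∑ s ∈ Finset.univ.filter (fun s => u ≤ s), P s ω)
          = fun ω => 1 - ∑ s ∈ Finset.univ.filter (fun s => ¬ u ≤ s), P s ω := by
        funext ω
        have := Finset.sum_filter_add_sum_filter_not Finset.univ (fun s => u ≤ s)
          (fun s => P s ω)
        rw [hPsum ω] at this
        linarith
      rw [hid]
      refine Measurable.const_sub (Finset.measurable_sum _ fun s hs => ?_) 1
      have hst : s ≤ t := by
        have : ¬ u ≤ s := (Finset.mem_filter.mp hs).2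
        exact (Order.lt_succ_iff_of_not_isMax ht).mp (not_le.mp this)
      exact (hPm s).mono (hmono hst) le_rfl
    have intSum : Integrable
        (fun ω => ∑ s ∈ Finset.univ.filter (fun s => u ≤ s), P s ω * Y s ω) Q :=
      integrable_finset_sum _ fun s _ => intPY s
    have intAcond : Integrable
        (fun ω => (∑ s ∈ Finset.univ.filter (fun s => u ≤ s), P s ω)
          * (Q[snell Q 𝓕 Y u | 𝓕 t]) ω) Q :=
      integrable_condExp.bdd_mul (hSm0 u).aestronglyMeasurable (Filter.Eventually.of_forall (hSbd u))
    have intPtSn : Integrable (fun ω => P t ω * snell Q 𝓕 Y t ω) Q :=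
      (snell_integrable Q 𝓕 Y hint t).bdd_mul (hPm0 t).aestronglyMeasurable (Filter.Eventually.of_forall (hbd t))
    calc ∫ ω, (∑ s ∈ Finset.univ.filter (fun s => t ≤ s), P s ω * Y s ω) ∂Q
        = ∫ ω, (P t ω * Y t ω
            + ∑ s ∈ Finset.univ.filter (fun s => u ≤ s), P s ω * Y s ω) ∂Q := by
          refine integral_congr_ae (Filter.Eventually.of_forall fun ω => ?_)
          simp only [hins, Finset.sum_insert hnotmem]
      _ = ∫ ω, P t ω * Y t ω ∂Q
            + ∫ ω, (∑ s ∈ Finset.univ.filter (fun s => u ≤ s), P s ω * Y s ω) ∂Q :=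
          integral_add (intPY t) intSum
      _ ≤ ∫ ω, P t ω * Y t ω ∂Q
            + ∫ ω, (∑ s ∈ Finset.univ.filter (fun s => u ≤ s), P s ω)
                * snell Q 𝓕 Y u ω ∂Q := by
          exact add_le_add_right (ih u hlt) _
      _ = ∫ ω, P t ω * Y t ω ∂Q
            + ∫ ω, (∑ s ∈ Finset.univ.filter (fun s => u ≤ s), P s ω)
                * (Q[snell Q 𝓕 Y u | 𝓕 t]) ω ∂Q := by
          congr 1
          have hmul := condExp_mul_of_stronglyMeasurable_left (m := 𝓕 t) (μ := Q)
            (f := fun ω => ∑ s ∈ Finset.univ.filter (fun s => u ≤ s), P s ω)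
            (g := snell Q 𝓕 Y u) hAmt.stronglyMeasurable (intSsnell u u)
            (snell_integrable Q 𝓕 Y hint u)
          calc ∫ ω, (∑ s ∈ Finset.univ.filter (fun s => u ≤ s), P s ω)
                  * snell Q 𝓕 Y u ω ∂Q
              = ∫ ω, (Q[(fun ω => ∑ s ∈ Finset.univ.filter (fun s => u ≤ s), P s ω)
                  * snell Q 𝓕 Y u | 𝓕 t]) ω ∂Q := (integral_condExp (hle t)).symm
            _ = ∫ ω, (∑ s ∈ Finset.univ.filter (fun s => u ≤ s), P s ω)
                  * (Q[snell Q 𝓕 Y u | 𝓕 t]) ω ∂Q := integral_congr_ae hmul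
      _ ≤ ∫ ω, P t ω * Y t ω ∂Q
            + ∫ ω, (∑ s ∈ Finset.univ.filter (fun s => u ≤ s), P s ω)
                * snell Q 𝓕 Y t ω ∂Q := by
          refine add_le_add_right (integral_mono intAcond (intSsnell u t) fun ω => ?_) _
          exact mul_le_mul_of_nonneg_left (condexp_le_snell Q 𝓕 Y ht ω) (hS0 u ω)
      _ ≤ ∫ ω, P t ω * snell Q 𝓕 Y t ω ∂Q
            + ∫ ω, (∑ s ∈ Finset.univ.filter (fun s => u ≤ s), P s ω)
                * snell Q 𝓕 Y t ω ∂Q := by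
          refine add_le_add_left (integral_mono (intPY t) intPtSn fun ω => ?_) _
          exact mul_le_mul_of_nonneg_left (le_snell Q 𝓕 Y t ω) (hP0 t ω)
      _ = ∫ ω, (∑ s ∈ Finset.univ.filter (fun s => t ≤ s), P s ω)
            * snell Q 𝓕 Y t ω ∂Q := by
          rw [← integral_add intPtSn (intSsnell u t)]
          refine integral_congr_ae (Filter.Eventually.of_forall fun ω => ?_)
          simp only [hins, Finset.sum_insert hnotmem, add_mul]

end RSPAux

theorem relaxed_value_attained_by_stopping_time
    {T Ω : Type*} [Fintype T] [Nonempty T] [LinearOrder T]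
    [m0 : MeasurableSpace Ω] (Q : Measure Ω) [IsProbabilityMeasure Q]
    (𝓕 : T → MeasurableSpace Ω) (hmono : Monotone 𝓕) (hle : ∀ t, 𝓕 t ≤ m0)
    (Y : T → Ω → ℝ) (hadp : ∀ t, Measurable[𝓕 t] (Y t))
    (hint : ∀ t, Integrable (Y t) Q) :
    ∃ τ : Ω → T,
      (∀ t, MeasurableSet[𝓕 t] {ω | τ ω ≤ t}) ∧
      ∫ ω, Y (τ ω) ω ∂Q =
        sSup {r : ℝ | ∃ P : T → Ω → ℝ,
          (∀ t, Measurable[𝓕 t] (P t)) ∧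
          (∀ t ω, 0 ≤ P t ω) ∧ (∀ t ω, P t ω ≤ 1) ∧
          (∀ ω, ∑ t, P t ω = 1) ∧
          r = ∫ ω, (∑ t, P t ω * Y t ω) ∂Q} := by
  classical
  set τ := RSPAux.tau Q 𝓕 Y with hτ
  refine ⟨τ, RSPAux.tau_measSet Q 𝓕 Y hmono hadp, ?_⟩
  set R := {r : ℝ | ∃ P : T → Ω → ℝ,
      (∀ t, Measurable[𝓕 t] (P t)) ∧
      (∀ t ω, 0 ≤ P t ω) ∧ (∀ t ω, P t ω ≤ 1) ∧
      (∀ ω, ∑ t, P t ω = 1) ∧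
      r = ∫ ω, (∑ t, P t ω * Y t ω) ∂Q} with hR
  have hmem : (∫ ω, Y (τ ω) ω ∂Q) ∈ R := by
    refine ⟨fun t ω => if τ ω = t then 1 else 0, ?_, ?_, ?_, ?_, ?_⟩
    · intro t
      exact Measurable.ite (RSPAux.tau_eq_measSet Q 𝓕 Y hmono hadp t)
        measurable_const measurable_const
    · intro t ω
      by_cases h : τ ω = t <;> simp [h]
    · intro t ω
      by_cases h : τ ω = t <;> simp [h]
    · intro ω
      rw [Finset.sum_ite_eq]
      simp
    · refine integral_congr_ae (Filter.Eventually.of_forall fun ω => ?_)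
      simp only [ite_mul, one_mul, zero_mul]
      exact RSPAux.Ytau_eq_sum Q 𝓕 Y ω
  have hub : ∀ r ∈ R, r ≤ ∫ ω, Y (τ ω) ω ∂Q := by
    rintro r ⟨P, hPm, hP0, hP1, hPsum, rfl⟩
    set b := (Finset.univ : Finset T).min' Finset.univ_nonempty with hb
    have hfilter : Finset.univ.filter (fun s : T => b ≤ s) = Finset.univ :=
      Finset.filter_true_of_mem fun s _ => Finset.min'_le _ _ (Finset.mem_univ s)
    have h1 := RSPAux.upper Q 𝓕 Y hmono hle hadp hint P hPm hP0 hPsum b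
    rw [hfilter] at h1
    have h2 : ∫ ω, (∑ s, P s ω) * RSPAux.snell Q 𝓕 Y b ω ∂Q
        = ∫ ω, RSPAux.snell Q 𝓕 Y b ω ∂Q := by
      refine integral_congr_ae (Filter.Eventually.of_forall fun ω => ?_)
      simp only [hPsum ω, one_mul]
    rw [h2] at h1
    rw [RSPAux.integral_snell_bot Q 𝓕 Y hmono hle hadp hint] at h1
    exact h1
  exact (IsGreatest.csSup_eq ⟨hmem, hub⟩).symm
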